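/- For a primitive polynomial Q in t variables of degree g and every prime p > g and integer ν ≥ 1, the number of solutions ξ ∈ (ℤ/p^νℤ)^t of Q(ξ) ≡ 0 (mod p^ν) is strictly less than p^(νt). -/

import Mathlib

open MvPolynomial Finset

variable {F : Type*} [Field F] [Fintype F] [DecidableEq F]

/-- One-variable step: roots of a nonzero polynomial over a field. -/
lemma card_filter_isRoot_le (f : Polynomial F) (hf : f ≠ 0) :
    (univ.filter fun y : F => Polynomial.eval y f = 0).card ≤ f.natDegree := by
  calc (univ.filter fun y : F => Polynomial.eval y f = 0).card
      ≤ f.roots.toFinset.card := by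
        apply Finset.card_le_card
        intro y hy
        simp only [mem_filter, mem_univ, true_and] at hy
        simp [Multiset.mem_toFinset, Polynomial.mem_roots, hf, hy, Polynomial.IsRoot]
    _ ≤ Multiset.card f.roots := Multiset.toFinset_card_le _
    _ ≤ f.natDegree := Polynomial.card_roots' f

/-- Schwartz–Zippel over a finite field, multiplied by `q` to avoid `n - 1`. -/
lemma schwartz_zippel_mul (n : ℕ) (P : MvPolynomial (Fin n) F) (hP : P ≠ 0) :
    (univ.filter fun x : Fin n → F => eval x P = 0).card * Fintype.card F
      ≤ P.totalDegree * Fintype.card F ^ n := by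
  induction n with
  | zero =>
    have : (univ.filter fun x : Fin 0 → F => eval x P = 0) = ∅ := by
      ext x
      simp only [mem_filter, mem_univ, true_and, Finset.notMem_empty, iff_false]
      rw [eq_C_of_isEmpty P]
      simp only [eval_C]
      intro h
      apply hP
      rw [eq_C_of_isEmpty P, h, map_zero]
    rw [show (univ : Finset (Fin 0 → F)).filter (fun x => eval x P = 0) = ∅ from this]
    simp
  | succ n ih =>
    set f : Polynomial (MvPolynomial (Fin n) F) := finSuccEquiv F n P with hf_def
    have hf : f ≠ 0 := by
      simp only [hf_def, ne_eq, EmbeddingLike.map_eq_zero_iff]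
      exact hP
    set k := f.natDegree with hk
    set c := f.leadingCoeff with hc_def
    have hc : c ≠ 0 := Polynomial.leadingCoeff_ne_zero.mpr hf
    have hdeg : c.totalDegree + k ≤ P.totalDegree := by
      have := totalDegree_coeff_finSuccEquiv_add_le P k
        (by rw [← hf_def, Polynomial.coeff_natDegree]; exact hc)
      rw [← hf_def] at this
      exact this
    set q := Fintype.card F with hq
    set S := univ.filter (fun x : Fin (n+1) → F => eval x P = 0) with hS
    set B := univ.filter (fun s : Fin n → F => eval s c = 0) with hB
    set r : (Fin n → F) → ℕ :=
      fun s => (univ.filter fun y : F => Polynomial.eval y (f.map (eval s)) = 0).card with hr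
    have hfib : ∀ s : Fin n → F, (S.filter fun x => Fin.tail x = s).card ≤ r s := by
      intro s
      apply Finset.card_le_card_of_injOn (fun x => x 0)
      · intro x hx
        simp only [hS, mem_coe, mem_filter, mem_univ, true_and] at hx
        obtain ⟨hx1, hx2⟩ := hx
        subst hx2
        have h3 := eval_eq_eval_mv_eval' (Fin.tail x) (x 0) P
        rw [Fin.cons_self_tail, ← hf_def] at h3
        simp only [mem_coe, mem_filter, mem_univ, true_and, hr]
        rw [← h3]
        exact hx1
      · intro x hx y hy hxy
        simp only [hS, mem_coe, mem_filter] at hx hy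
        funext i
        refine Fin.cases ?_ ?_ i
        · exact hxy
        · intro j
          show Fin.tail x j = Fin.tail y j
          rw [hx.2, hy.2]
    have hrq : ∀ s : Fin n → F, r s ≤ q := fun s =>
      (Finset.card_filter_le _ _).trans (le_of_eq (Finset.card_univ))
    have hrk : ∀ s ∉ B, r s ≤ k := by
      intro s hs
      simp only [hB, mem_filter, mem_univ, true_and] at hs
      have hmap : f.map (eval s) ≠ 0 := by
        intro h0
        apply hs
        have := Polynomial.coeff_map (eval s) k (p := f)
        rw [h0, Polynomial.coeff_zero] at this
        rw [hc_def, Polynomial.leadingCoeff, ← hk]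
        exact this.symm
      exact (card_filter_isRoot_le _ hmap).trans Polynomial.natDegree_map_le
    have hcard : (univ : Finset (Fin n → F)).card = q ^ n := by
      rw [Finset.card_univ, hq]
      simp [Fintype.card_fun]
    have key : S.card ≤ B.card * q + q ^ n * k := by
      rw [Finset.card_eq_sum_card_fiberwise (f := fun x => Fin.tail x)
        (t := (univ : Finset (Fin n → F))) (fun x _ => mem_univ _)]
      calc ∑ s ∈ univ, (S.filter fun x => Fin.tail x = s).card
          ≤ ∑ s ∈ univ, r s := Finset.sum_le_sum (fun s _ => hfib s)
        _ = ∑ s ∈ B, r s + ∑ s ∈ univ.filter (fun s => ¬ eval s c = 0), r s := by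
            rw [hB, Finset.sum_filter_add_sum_filter_not]
        _ ≤ ∑ s ∈ B, q + ∑ s ∈ univ.filter (fun s => ¬ eval s c = 0), k := by
            apply Nat.add_le_add
            · exact Finset.sum_le_sum (fun s _ => hrq s)
            · refine Finset.sum_le_sum (fun s hs => hrk s ?_)
              simp only [hB, mem_filter, mem_univ, true_and] at hs ⊢
              exact hs
        _ = B.card * q + (univ.filter (fun s => ¬ eval s c = 0)).card * k := by
            rw [Finset.sum_const, Finset.sum_const, smul_eq_mul, smul_eq_mul]
        _ ≤ B.card * q + q ^ n * k := by
            apply Nat.add_le_add_left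
            apply Nat.mul_le_mul_right
            rw [← hcard]
            exact Finset.card_filter_le _ _
    have ihc : B.card * q ≤ c.totalDegree * q ^ n := ih c hc
    calc S.card * q ≤ (B.card * q + q ^ n * k) * q := Nat.mul_le_mul_right q key
      _ = (B.card * q) * q + k * q ^ (n + 1) := by ring
      _ ≤ (c.totalDegree * q ^ n) * q + k * q ^ (n + 1) :=
          Nat.add_le_add_right (Nat.mul_le_mul_right q ihc) _
      _ = (c.totalDegree + k) * q ^ (n + 1) := by ring
      _ ≤ P.totalDegree * q ^ (n + 1) := Nat.mul_le_mul_right _ hdeg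

/-- Each fiber of `ZMod.castHom : ZMod (p^ν) → ZMod p` has `p^(ν-1)` elements. -/
lemma card_fiber_castHom (p ν : ℕ) (hp : p.Prime) (hν : 1 ≤ ν) (b : ZMod p) :
    haveI : NeZero p := ⟨hp.pos.ne'⟩
    haveI : NeZero (p ^ ν) := ⟨pow_ne_zero _ hp.pos.ne'⟩
    (univ.filter fun x : ZMod (p ^ ν) =>
      ZMod.castHom (dvd_pow_self p (Nat.one_le_iff_ne_zero.mp hν)) (ZMod p) x = b).card
      = p ^ (ν - 1) := by
  haveI : NeZero p := ⟨hp.pos.ne'⟩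
  haveI : NeZero (p ^ ν) := ⟨pow_ne_zero _ hp.pos.ne'⟩
  set φ := ZMod.castHom (dvd_pow_self p (Nat.one_le_iff_ne_zero.mp hν)) (ZMod p) with hφ
  set lift : ZMod p → ZMod (p ^ ν) := fun b => (b.val : ZMod (p ^ ν)) with hlift_def
  have hlift : ∀ b : ZMod p, φ (lift b) = b := by
    intro b
    simp [hlift_def, hφ, map_natCast, ZMod.natCast_val, ZMod.cast_id]
  have hconst : ∀ b₁ b₂ : ZMod p,
      (univ.filter fun x => φ x = b₁).card = (univ.filter fun x => φ x = b₂).card := by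
    intro b₁ b₂
    apply Finset.card_bij' (fun x _ => x + lift b₂ - lift b₁) (fun x _ => x + lift b₁ - lift b₂)
    · intro x hx
      simp only [mem_filter, mem_univ, true_and] at hx ⊢
      simp [map_sub, map_add, hlift, hx]
    · intro x hx
      simp only [mem_filter, mem_univ, true_and] at hx ⊢
      simp [map_sub, map_add, hlift, hx]
    · intro x _; ring
    · intro x _; ring
  have hsum : (univ : Finset (ZMod (p ^ ν))).card
      = ∑ b : ZMod p, (univ.filter fun x => φ x = b).card :=
    Finset.card_eq_sum_card_fiberwise (fun x _ => mem_univ _)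
  have hsum2 : p ^ ν = p * (univ.filter fun x => φ x = b).card := by
    have h1 : (univ : Finset (ZMod (p ^ ν))).card = p ^ ν := by
      rw [Finset.card_univ, ZMod.card]
    rw [Finset.sum_congr rfl (fun b' _ => hconst b' b), Finset.sum_const, smul_eq_mul,
      Finset.card_univ, ZMod.card] at hsum
    have h2 : (univ : Finset (ZMod p)).card = p := by rw [Finset.card_univ, ZMod.card]
    rw [h2] at hsum
    exact hsum
  have : p * (univ.filter fun x => φ x = b).card = p * p ^ (ν - 1) := by
    rw [← hsum2]
    conv_lhs => rw [← Nat.sub_add_cancel hν]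
    ring
  exact Nat.eq_of_mul_eq_mul_left hp.pos this

/-- Fibers of the componentwise reduction map on tuples. -/
lemma card_fiber_pi (p ν t : ℕ) (hp : p.Prime) (hν : 1 ≤ ν) (s : Fin t → ZMod p) :
    haveI : NeZero p := ⟨hp.pos.ne'⟩
    haveI : NeZero (p ^ ν) := ⟨pow_ne_zero _ hp.pos.ne'⟩
    (univ.filter fun ξ : Fin t → ZMod (p ^ ν) =>
        (fun i => ZMod.castHom (dvd_pow_self p (Nat.one_le_iff_ne_zero.mp hν)) (ZMod p) (ξ i))
          = s).card
      = p ^ ((ν - 1) * t) := by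
  haveI : NeZero p := ⟨hp.pos.ne'⟩
  haveI : NeZero (p ^ ν) := ⟨pow_ne_zero _ hp.pos.ne'⟩
  set φ := ZMod.castHom (dvd_pow_self p (Nat.one_le_iff_ne_zero.mp hν)) (ZMod p) with hφ
  have e : {ξ : Fin t → ZMod (p ^ ν) // (fun i => φ (ξ i)) = s}
      ≃ (∀ i, {x : ZMod (p ^ ν) // φ x = s i}) :=
    { toFun := fun ξ i => ⟨ξ.1 i, congrFun ξ.2 i⟩
      invFun := fun h => ⟨fun i => (h i).1, funext fun i => (h i).2⟩
      left_inv := fun ξ => rfl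
      right_inv := fun h => rfl }
  rw [← Fintype.card_subtype, Fintype.card_congr e, Fintype.card_pi]
  have h1 : ∀ i : Fin t, Fintype.card {x : ZMod (p ^ ν) // φ x = s i} = p ^ (ν - 1) := by
    intro i
    rw [Fintype.card_subtype]
    exact card_fiber_castHom p ν hp hν (s i)
  rw [Finset.prod_congr rfl (fun i _ => h1 i), Finset.prod_const, Finset.card_univ,
    Fintype.card_fin, ← pow_mul]

/-- For a primitive polynomial `Q` of degree `g` in `t` variables and a prime `p > g`,
the number of zeros of `Q` modulo `p^ν` is at most `g * p^(νt-1)`, hence `< p^(νt)`. -/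
theorem rho_lt_pow_of_prime_gt_deg
    (t g : ℕ) (ht : 1 ≤ t) (hg : 1 ≤ g)
    (Q : MvPolynomial (Fin t) ℤ)
    (hdeg : Q.totalDegree = g)
    (hprim : ∀ d : ℤ, (∀ m, d ∣ Q.coeff m) → IsUnit d)
    (p : ℕ) (hp : p.Prime) (hpg : g < p) (ν : ℕ) (hν : 1 ≤ ν) :
    Nat.card {ξ : Fin t → ZMod (p ^ ν) // MvPolynomial.aeval ξ Q = 0} ≤ g * p ^ (ν * t - 1) ∧
      Nat.card {ξ : Fin t → ZMod (p ^ ν) // MvPolynomial.aeval ξ Q = 0} < p ^ (ν * t) := by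
  haveI : Fact p.Prime := ⟨hp⟩
  haveI : NeZero p := ⟨hp.pos.ne'⟩
  haveI : NeZero (p ^ ν) := ⟨pow_ne_zero _ hp.pos.ne'⟩
  set φ := ZMod.castHom (dvd_pow_self p (Nat.one_le_iff_ne_zero.mp hν)) (ZMod p) with hφ
  set Qp := MvPolynomial.map (Int.castRingHom (ZMod p)) Q with hQp
  -- `Q` mod `p` is nonzero by primitivity
  have hQp0 : Qp ≠ 0 := by
    intro h0
    have hdvd : ∀ m, (p : ℤ) ∣ Q.coeff m := by
      intro m
      rw [← ZMod.intCast_zmod_eq_zero_iff_dvd]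
      have h := MvPolynomial.coeff_map (Int.castRingHom (ZMod p)) Q m
      rw [← hQp, h0] at h
      simpa using h.symm
    have hu := hprim p hdvd
    rw [Int.isUnit_iff] at hu
    have h2 := hp.two_le
    rcases hu with h | h <;> omega
  have hdegp : Qp.totalDegree ≤ g := by
    rw [← hdeg, MvPolynomial.totalDegree, MvPolynomial.totalDegree]
    exact Finset.sup_mono (MvPolynomial.support_map_subset _ _)
  -- Schwartz–Zippel mod p
  set Sp := univ.filter (fun s : Fin t → ZMod p => MvPolynomial.eval s Qp = 0) with hSp
  have hSZ : Sp.card * p ≤ g * p ^ t := by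
    have h := schwartz_zippel_mul t Qp hQp0
    rw [ZMod.card] at h
    exact h.trans (Nat.mul_le_mul_right _ hdegp)
  have hSp_le : Sp.card ≤ g * p ^ (t - 1) := by
    have hpt : p ^ t = p ^ (t - 1) * p := by
      conv_lhs => rw [← Nat.sub_add_cancel ht]
      ring
    rw [hpt, ← mul_assoc] at hSZ
    exact Nat.le_of_mul_le_mul_right hSZ hp.pos
  -- zeros mod p^ν
  set S := univ.filter (fun ξ : Fin t → ZMod (p ^ ν) => MvPolynomial.aeval ξ Q = 0) with hS
  have hmaps : ∀ ξ ∈ S, (fun i => φ (ξ i)) ∈ Sp := by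
    intro ξ hξ
    simp only [hS, hSp, mem_filter, mem_univ, true_and] at hξ ⊢
    have h1 : φ (MvPolynomial.aeval ξ Q) = MvPolynomial.eval (fun i => φ (ξ i)) Qp := by
      rw [MvPolynomial.aeval_def, MvPolynomial.eval₂_comp_left φ]
      rw [hQp, ← MvPolynomial.eval₂_eq_eval_map]
      congr 1
      exact Subsingleton.elim _ _
    rw [← h1, hξ, map_zero]
  have hcount : S.card ≤ Sp.card * p ^ ((ν - 1) * t) := by
    rw [Finset.card_eq_sum_card_fiberwise hmaps]
    calc ∑ s ∈ Sp, (S.filter fun ξ => (fun i => φ (ξ i)) = s).card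
        ≤ ∑ _s ∈ Sp, p ^ ((ν - 1) * t) := by
          refine Finset.sum_le_sum fun s _ => ?_
          rw [← card_fiber_pi p ν t hp hν s]
          exact Finset.card_le_card
            (Finset.filter_subset_filter _ (Finset.subset_univ S))
      _ = Sp.card * p ^ ((ν - 1) * t) := by
          rw [Finset.sum_const, smul_eq_mul]
  have hexp : (t - 1) + (ν - 1) * t = ν * t - 1 := by
    obtain ⟨a, rfl⟩ := Nat.exists_eq_add_of_le hν
    obtain ⟨b, rfl⟩ := Nat.exists_eq_add_of_le ht
    simp only [Nat.add_sub_cancel_left]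
    ring_nf
    omega
  have hmain : S.card ≤ g * p ^ (ν * t - 1) := by
    calc S.card ≤ Sp.card * p ^ ((ν - 1) * t) := hcount
      _ ≤ g * p ^ (t - 1) * p ^ ((ν - 1) * t) := Nat.mul_le_mul_right _ hSp_le
      _ = g * p ^ ((t - 1) + (ν - 1) * t) := by rw [pow_add, mul_assoc]
      _ = g * p ^ (ν * t - 1) := by rw [hexp]
  have hNat : Nat.card {ξ : Fin t → ZMod (p ^ ν) // MvPolynomial.aeval ξ Q = 0} = S.card := by
    rw [Nat.card_eq_fintype_card, Fintype.card_subtype]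
  constructor
  · rw [hNat]; exact hmain
  · rw [hNat]
    have hνt : 1 ≤ ν * t := Nat.one_le_iff_ne_zero.mpr (Nat.mul_ne_zero (by omega) (by omega))
    calc S.card ≤ g * p ^ (ν * t - 1) := hmain
      _ < p * p ^ (ν * t - 1) :=
          Nat.mul_lt_mul_of_lt_of_le hpg (le_refl _) (pow_pos hp.pos _)
      _ = p ^ (ν * t) := by
          rw [← pow_succ']
          congr 1
          omega
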